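/- Let k > 0, let m ≥ 2 be an integer, and let 0 < R < π/(2k). Set S(t) = sin(kt)/k and define E(t) = ∫_t^R (1/S(σ)^{m-2})·(∫₀^σ S(s)^{m-2} ds) dσ for t ∈ (0,R]. Then on the interval (0,R) the function t ↦ E'(t)/S(t) is negative and strictly monotone decreasing. -/

import Mathlib

open Real Set intervalIntegral MeasureTheory

/-- Markvorsen's Proposition 4, radial form, spherical case: with `S(t) = sin(kt)/k` and
`E(t) = ∫_t^R (1/S(σ)^(m-2)) ∫₀^σ S(s)^(m-2) ds dσ`, `0 < R < π/(2k)`, the function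
`t ↦ E'(t)/S(t)` is negative and strictly decreasing on `(0,R)`. -/
theorem stmt_7 (k : ℝ) (hk : 0 < k) (m : ℕ) (hm : 2 ≤ m) (R : ℝ)
    (hR : 0 < R) (hR' : R < Real.pi / (2 * k))
    (S : ℝ → ℝ) (hS : ∀ t, S t = Real.sin (k * t) / k)
    (E : ℝ → ℝ)
    (hE : ∀ t, E t = ∫ σ in t..R, (1 / S σ ^ (m - 2)) * ∫ s in (0:ℝ)..σ, S s ^ (m - 2)) :
    (∀ t ∈ Set.Ioo 0 R, deriv E t / S t < 0) ∧
      StrictAntiOn (fun t => deriv E t / S t) (Set.Ioo 0 R) := by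
  have hπ := Real.pi_pos
  set n := m - 2 with hn
  set I : ℝ → ℝ := fun σ => ∫ s in (0:ℝ)..σ, S s ^ n with hIdef
  set f : ℝ → ℝ := fun σ => (1 / S σ ^ n) * I σ with hfdef
  -- bounds
  have hRπk : Real.pi / (2 * k) < Real.pi / k := by
    rw [div_lt_div_iff₀ (by positivity) hk]; nlinarith
  -- S is continuous, differentiable
  have hScont : Continuous S := by
    have : Continuous fun t => Real.sin (k * t) / k :=
      (Real.continuous_sin.comp (continuous_const.mul continuous_id)).div_const k
    simpa [funext hS] using this
  have hSderiv : ∀ t, HasDerivAt S (Real.cos (k * t)) t := by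
    intro t
    have h1 : HasDerivAt (fun t : ℝ => k * t) k t := by
      simpa using (hasDerivAt_id t).const_mul k
    have h2 : HasDerivAt (fun t : ℝ => Real.sin (k * t)) (Real.cos (k * t) * k) t :=
      (Real.hasDerivAt_sin (k * t)).comp t h1
    have h3 := h2.div_const k
    have : Real.cos (k * t) * k / k = Real.cos (k * t) := by
      field_simp
    rw [this] at h3
    simpa [funext hS] using h3
  have hSpos : ∀ t, 0 < t → t < Real.pi / k → 0 < S t := by
    intro t ht ht'
    rw [hS]
    apply div_pos _ hk
    apply Real.sin_pos_of_pos_of_lt_pi (by positivity)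
    calc k * t < k * (Real.pi / k) := by exact (mul_lt_mul_iff_right₀ hk).2 ht'
    _ = Real.pi := by field_simp
  -- I has derivative S t ^ n everywhere
  have hIderiv : ∀ t, HasDerivAt I (S t ^ n) t := by
    intro t
    exact intervalIntegral.integral_hasDerivAt_right ((hScont.pow n).intervalIntegrable 0 t)
      ((hScont.pow n).stronglyMeasurableAtFilter _ _) ((hScont.pow n).continuousAt)
  -- continuity of f on the open set
  have hfca : ∀ x ∈ Set.Ioo (0:ℝ) (Real.pi / k), ContinuousAt f x := by
    intro x hx
    have hne : S x ^ n ≠ 0 := pow_ne_zero _ (hSpos x hx.1 hx.2).ne'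
    exact (continuousAt_const.div ((hScont.pow n).continuousAt) hne).mul
      (hIderiv x).continuousAt
  have hfc : ContinuousOn f (Set.Ioo (0:ℝ) (Real.pi / k)) :=
    fun x hx => (hfca x hx).continuousWithinAt
  -- derivative of E
  have hEderiv : ∀ t ∈ Set.Ioo 0 R, HasDerivAt E (-(f t)) t := by
    intro t ht
    have htmem : t ∈ Set.Ioo (0:ℝ) (Real.pi / k) := ⟨ht.1, ht.2.trans (hR'.trans hRπk)⟩
    have hRmem : R ∈ Set.Ioo (0:ℝ) (Real.pi / k) := ⟨hR, hR'.trans hRπk⟩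
    have hsub : Set.uIcc R t ⊆ Set.Ioo (0:ℝ) (Real.pi / k) :=
      Set.OrdConnected.uIcc_subset Set.ordConnected_Ioo hRmem htmem
    have hint : IntervalIntegrable f volume R t :=
      (hfc.mono hsub).intervalIntegrable
    have hG : HasDerivAt (fun u => ∫ σ in R..u, f σ) (f t) t :=
      intervalIntegral.integral_hasDerivAt_right hint
        (hfc.stronglyMeasurableAtFilter isOpen_Ioo t htmem) (hfca t htmem)
    have hEeq : E = fun u => -∫ σ in R..u, f σ := by
      funext u
      rw [hE u, intervalIntegral.integral_symm]
    rw [hEeq]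
    exact hG.neg
  -- key positivity facts on Ioo 0 R
  have hSpos' : ∀ t ∈ Set.Ioo 0 R, 0 < S t := fun t ht =>
    hSpos t ht.1 (ht.2.trans (hR'.trans hRπk))
  have hIpos : ∀ t ∈ Set.Ioo 0 R, 0 < I t := by
    intro t ht
    apply intervalIntegral.intervalIntegral_pos_of_pos_on
      ((hScont.pow n).intervalIntegrable 0 t)
    · intro s hs
      exact pow_pos (hSpos s hs.1 (hs.2.trans (ht.2.trans (hR'.trans hRπk)))) n
    · exact ht.1
  -- key inequality
  have hkey : ∀ t ∈ Set.Ioo 0 R,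
      ((m - 1 : ℕ) : ℝ) * Real.cos (k * t) * I t < S t ^ (m - 1) := by
    intro t ht
    have htpos := ht.1
    have hkt2 : k * t < Real.pi / 2 := by
      have := ht.2.trans hR'
      calc k * t < k * (Real.pi / (2 * k)) := (mul_lt_mul_iff_right₀ hk).2 this
      _ = Real.pi / 2 := by field_simp
    -- FTC identity
    have hftc : (∫ s in (0:ℝ)..t, ((m - 1 : ℕ) : ℝ) * Real.cos (k * s) * S s ^ n)
        = S t ^ (m - 1) := by
      have hd : ∀ x ∈ Set.uIcc (0:ℝ) t,
          HasDerivAt (fun u => S u ^ (m - 1))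
            (((m - 1 : ℕ) : ℝ) * Real.cos (k * x) * S x ^ n) x := by
        intro x _
        have := (hSderiv x).fun_pow (m - 1)
        have hmn : m - 1 - 1 = n := by omega
        rw [hmn] at this
        rw [show ((m - 1 : ℕ) : ℝ) * Real.cos (k * x) * S x ^ n
            = ((m - 1 : ℕ) : ℝ) * S x ^ n * Real.cos (k * x) by ring]
        exact this
      have hcont : Continuous fun s => ((m - 1 : ℕ) : ℝ) * Real.cos (k * s) * S s ^ n :=
        (continuous_const.mul (Real.continuous_cos.comp (continuous_const.mul
          continuous_id))).mul (hScont.pow n)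
      have := intervalIntegral.integral_eq_sub_of_hasDerivAt hd
        (hcont.intervalIntegrable 0 t)
      rw [this]
      have hS0 : S 0 = 0 := by rw [hS]; simp
      rw [hS0, zero_pow (by omega : m - 1 ≠ 0), sub_zero]
    have hconst : ((m - 1 : ℕ) : ℝ) * Real.cos (k * t) * I t
        = ∫ s in (0:ℝ)..t, ((m - 1 : ℕ) : ℝ) * Real.cos (k * t) * S s ^ n := by
      rw [hIdef]
      rw [← intervalIntegral.integral_const_mul]
    rw [hconst, ← hftc]
    apply intervalIntegral.integral_lt_integral_of_continuousOn_of_le_of_exists_lt htpos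
    · exact ((continuous_const.mul (hScont.pow n)).continuousOn)
    · exact ((continuous_const.mul (Real.continuous_cos.comp (continuous_const.mul
          continuous_id))).mul (hScont.pow n)).continuousOn
    · intro s hs
      have hcos : Real.cos (k * t) ≤ Real.cos (k * s) := by
        apply Real.cos_le_cos_of_nonneg_of_le_pi (mul_nonneg hk.le hs.1.le)
          (by linarith [hkt2, Real.pi_pos]) ((mul_le_mul_iff_right₀ hk).2 hs.2)
      have hSn : (0:ℝ) ≤ S s ^ n :=
        (pow_pos (hSpos s hs.1 (lt_of_le_of_lt hs.2 (ht.2.trans (hR'.trans hRπk)))) n).le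
      have hm1 : (0:ℝ) ≤ ((m - 1 : ℕ) : ℝ) := by positivity
      have h1 := mul_le_mul_of_nonneg_right hcos hSn
      have h2 := mul_le_mul_of_nonneg_left h1 hm1
      calc ((m - 1 : ℕ) : ℝ) * Real.cos (k * t) * S s ^ n
          = ((m - 1 : ℕ) : ℝ) * (Real.cos (k * t) * S s ^ n) := by ring
        _ ≤ ((m - 1 : ℕ) : ℝ) * (Real.cos (k * s) * S s ^ n) := h2
        _ = ((m - 1 : ℕ) : ℝ) * Real.cos (k * s) * S s ^ n := by ring
    · refine ⟨t / 2, ⟨by linarith, by linarith⟩, ?_⟩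
      have hcos : Real.cos (k * t) < Real.cos (k * (t / 2)) := by
        apply Real.strictAntiOn_cos ⟨by nlinarith, by nlinarith [Real.pi_pos]⟩
          ⟨by nlinarith, by nlinarith [Real.pi_pos]⟩
        nlinarith
      have hSn : (0:ℝ) < S (t / 2) ^ n :=
        pow_pos (hSpos (t/2) (by linarith) (by linarith [ht.2.trans (hR'.trans hRπk)])) n
      have hm1 : (1:ℝ) ≤ ((m - 1 : ℕ) : ℝ) := by
        have : 1 ≤ m - 1 := by omega
        exact_mod_cast this
      have h1 : Real.cos (k * t) * S (t/2) ^ n < Real.cos (k * (t/2)) * S (t/2) ^ n :=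
        mul_lt_mul_of_pos_right hcos hSn
      have h2 := mul_lt_mul_of_pos_left h1 (by linarith : (0:ℝ) < ((m - 1 : ℕ) : ℝ))
      calc ((m - 1 : ℕ) : ℝ) * Real.cos (k * t) * S (t/2) ^ n
          = ((m - 1 : ℕ) : ℝ) * (Real.cos (k * t) * S (t/2) ^ n) := by ring
        _ < ((m - 1 : ℕ) : ℝ) * (Real.cos (k * (t/2)) * S (t/2) ^ n) := h2
        _ = ((m - 1 : ℕ) : ℝ) * Real.cos (k * (t/2)) * S (t/2) ^ n := by ring
  -- the quotient function g
  set g : ℝ → ℝ := fun t => I t / S t ^ (m - 1) with hgdef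
  have heq : ∀ t ∈ Set.Ioo 0 R, deriv E t / S t = -(g t) := by
    intro t ht
    rw [(hEderiv t ht).deriv]
    have hStpos := hSpos' t ht
    have hSne : S t ≠ 0 := hStpos.ne'
    rw [hfdef, hgdef]
    simp only
    have hmn : n + 1 = m - 1 := by omega
    rw [neg_div]
    congr 1
    rw [← hmn, pow_succ]
    field_simp
    try ring
  have hgd : ∀ t ∈ Set.Ioo 0 R, HasDerivAt g
      ((S t ^ n * S t ^ (m-1) - I t * (((m - 1 : ℕ) : ℝ) * S t ^ n * Real.cos (k * t)))
        / (S t ^ (m-1)) ^ 2) t := by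
    intro t ht
    have hStpos := hSpos' t ht
    have hDd : HasDerivAt (fun u => S u ^ (m - 1))
        (((m - 1 : ℕ) : ℝ) * S t ^ n * Real.cos (k * t)) t := by
      have := (hSderiv t).pow (m - 1)
      have hmn : m - 1 - 1 = n := by omega
      rw [hmn] at this
      exact this
    exact (hIderiv t).div hDd (pow_ne_zero _ hStpos.ne')
  have hgpos : ∀ t ∈ Set.Ioo 0 R, 0 < g t := by
    intro t ht
    exact div_pos (hIpos t ht) (pow_pos (hSpos' t ht) _)
  have hgmono : StrictMonoOn g (Set.Ioo 0 R) := by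
    apply strictMonoOn_of_deriv_pos (convex_Ioo 0 R)
    · intro x hx
      exact (hgd x hx).continuousAt.continuousWithinAt
    · intro x hx
      rw [interior_Ioo] at hx
      rw [(hgd x hx).deriv]
      have hStpos := hSpos' x hx
      apply div_pos
      · have := hkey x hx
        nlinarith [pow_pos hStpos n, hIpos x hx]
      · positivity
  constructor
  · intro t ht
    rw [heq t ht]
    linarith [hgpos t ht]
  · intro a ha b hb hab
    simp only
    rw [heq a ha, heq b hb]
    exact neg_lt_neg (hgmono ha hb hab)
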